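/- arXiv:1302.0930 — 2 statements merged into one kernel-verified Lean document; each statement's English description precedes it below -/
import Mathlib

section
/- Let Λ be a quasifan in ℚⁿ each of whose cones is the ℚ_{≥0}-cone generated by finitely many points of ℤⁿ. Then the quasifan algebra k[Λ] is a finitely generated k-algebra, its weight set equals |Λ| ∩ ℤⁿ, and this weight set is saturated (if m·χ ∈ |Λ| ∩ ℤⁿ for some integer m > 0 then χ ∈ |Λ| ∩ ℤⁿ). Hence Spec k[Λ] is an affine stable toric variety: k[Λ] is finitely generated, reduced, multiplicity-free, with saturated weight set. -/
/-- The canonical embedding `ℤⁿ → ℚⁿ`. -/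
def embQ {n : ℕ} (χ : Fin n → ℤ) : Fin n → ℚ := fun i => (χ i : ℚ)

/-- The `ℚ≥0`-cone generated by a subset of `ℚⁿ`. -/
def coneGen {n : ℕ} (S : Set (Fin n → ℚ)) : Set (Fin n → ℚ) :=
  {x | ∃ (t : Finset (Fin n → ℚ)) (c : (Fin n → ℚ) → ℚ),
    (t : Set (Fin n → ℚ)) ⊆ S ∧ (∀ v ∈ t, 0 ≤ c v) ∧ x = ∑ v ∈ t, c v • v}

/-- A convex cone in `ℚⁿ`: contains `0` and is closed under addition and under
multiplication by nonnegative rational scalars. -/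
def IsCone {n : ℕ} (c : Set (Fin n → ℚ)) : Prop :=
  (0 : Fin n → ℚ) ∈ c ∧ (∀ x ∈ c, ∀ y ∈ c, x + y ∈ c) ∧
    ∀ q : ℚ, 0 ≤ q → ∀ x ∈ c, q • x ∈ c

/-- `μ` is a face of the convex cone `c`: a convex subcone such that whenever a sum of two
elements of `c` lies in `μ`, both summands lie in `μ`. -/
def IsFace {n : ℕ} (μ c : Set (Fin n → ℚ)) : Prop :=
  IsCone μ ∧ μ ⊆ c ∧ ∀ x ∈ c, ∀ y ∈ c, x + y ∈ μ → x ∈ μ ∧ y ∈ μ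

/-- A quasifan in `ℚⁿ`: a finite collection of convex cones, closed under passing to faces,
such that the intersection of any two of its cones is a face of each of them. -/
def IsQuasifan {n : ℕ} (Λ : Set (Set (Fin n → ℚ))) : Prop :=
  Λ.Finite ∧ (∀ c ∈ Λ, IsCone c) ∧ (∀ c ∈ Λ, ∀ μ, IsFace μ c → μ ∈ Λ) ∧
    ∀ c ∈ Λ, ∀ c' ∈ Λ, IsFace (c ∩ c') c ∧ IsFace (c ∩ c') c'

/-- The lattice points of the support `|Λ| = ⋃₀ Λ` of a quasifan. -/
def QLat {n : ℕ} (Λ : Set (Set (Fin n → ℚ))) : Type :=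
  {χ : Fin n → ℤ // embQ χ ∈ ⋃₀ Λ}

theorem embQ_add {n : ℕ} (a b : Fin n → ℤ) : embQ (a + b) = embQ a + embQ b := by
  funext i; simp [embQ]

/-- If `χ₁` and `χ₂` lie (after embedding) in a common cone of the quasifan `Λ`, then
`χ₁ + χ₂` is a lattice point of the support of `Λ`. -/
theorem embQ_add_mem_support {n : ℕ} {Λ : Set (Set (Fin n → ℚ))} (hΛ : IsQuasifan Λ)
    {χ₁ χ₂ : Fin n → ℤ} (h : ∃ c ∈ Λ, embQ χ₁ ∈ c ∧ embQ χ₂ ∈ c) :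
    embQ (χ₁ + χ₂) ∈ ⋃₀ Λ := by
  obtain ⟨c, hc, h1, h2⟩ := h
  exact ⟨c, hc, (embQ_add χ₁ χ₂) ▸ (hΛ.2.1 c hc).2.1 _ h1 _ h2⟩

/-- The degree-`χ` component of the quasifan algebra presented by a basis `x` indexed by the
lattice points of the support: the span of `x^χ` if `χ` is a lattice point of the support,
and `0` otherwise. -/
def qfaComponent {n : ℕ} {k C : Type} [Field k] [CommRing C] [Algebra k C]
    {Λ : Set (Set (Fin n → ℚ))} (x : Module.Basis (QLat Λ) k C) (χ : Fin n → ℤ) :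
    Submodule k C :=
  Submodule.span k {y : C | ∃ h : embQ χ ∈ ⋃₀ Λ, y = x ⟨χ, h⟩}

/- ### Auxiliary lemmas -/

lemma embQ_injective {n : ℕ} : Function.Injective (embQ (n := n)) := by
  intro a b h
  funext i
  have := congrFun h i
  simpa [embQ] using this

lemma embQ_sub {n : ℕ} (a b : Fin n → ℤ) : embQ (a - b) = embQ a - embQ b := by
  funext i; simp [embQ]

lemma embQ_nsmul {n : ℕ} (m : ℕ) (a : Fin n → ℤ) : embQ (m • a) = (m : ℚ) • embQ a := by
  funext i; simp [embQ]

lemma coneGen_int {n : ℕ} (S : Finset (Fin n → ℤ)) (y : Fin n → ℚ) :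
    y ∈ coneGen (embQ '' (S : Set (Fin n → ℤ))) ↔
      ∃ d : (Fin n → ℤ) → ℚ, (∀ v, 0 ≤ d v) ∧ y = ∑ v ∈ S, d v • embQ v := by
  constructor
  · rintro ⟨t, c, hts, hc, rfl⟩
    refine ⟨fun v => if embQ v ∈ t then c (embQ v) else 0, ?_, ?_⟩
    · intro v
      by_cases h : embQ v ∈ t
      · simpa [h] using hc _ h
      · simp [h]
    · have himg : t = (S.filter (fun v => embQ v ∈ t)).image embQ := by
        ext y
        simp only [Finset.mem_image, Finset.mem_filter]
        constructor
        · intro hy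
          obtain ⟨v, hv, rfl⟩ := hts hy
          exact ⟨v, ⟨hv, hy⟩, rfl⟩
        · rintro ⟨v, ⟨-, hv⟩, rfl⟩
          exact hv
      conv_lhs => rw [himg]
      rw [Finset.sum_image (fun a _ b _ h => embQ_injective h), Finset.sum_filter]
      apply Finset.sum_congr rfl
      intro v _
      by_cases h : embQ v ∈ t <;> simp [h]
  · rintro ⟨d, hd, rfl⟩
    refine ⟨S.image embQ, Function.extend embQ d 0, ?_, ?_, ?_⟩
    · rw [Finset.coe_image]
    · intro y hy
      obtain ⟨v, _, rfl⟩ := Finset.mem_image.1 hy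
      rw [Function.Injective.extend_apply embQ_injective]
      exact hd v
    · rw [Finset.sum_image (fun a _ b _ h => embQ_injective h)]
      apply Finset.sum_congr rfl
      intro v _
      rw [Function.Injective.extend_apply embQ_injective]

lemma lex_add_lt {n : ℕ} {a b : Fin n → ℤ} (h : toLex a < toLex b) (c : Fin n → ℤ) :
    toLex (a + c) < toLex (b + c) := by
  obtain ⟨i, hj, hi⟩ := h
  exact ⟨i, fun j hji => by simpa using congrArg (· + c j) (hj j hji), by
    simpa using add_lt_add_right hi (c i)⟩

lemma exists_extremal {n : ℕ} (F : Finset (Fin n → ℤ)) (hF : F.Nonempty) :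
    ∃ χ ∈ F, ∀ a ∈ F, ∀ b ∈ F, a + b = χ + χ → a = χ ∧ b = χ := by
  classical
  letI : LinearOrder (Lex (Fin n → ℤ)) :=
    @Pi.Lex.linearOrder (Fin n) (fun _ => ℤ) Fin.instLinearOrder
      (inferInstance : WellFoundedLT (Fin n)) (fun _ => Int.instLinearOrder)
  obtain ⟨χ, hχF, hmax⟩ := F.exists_max_image (fun v => toLex v) hF
  refine ⟨χ, hχF, ?_⟩
  have key : ∀ a ∈ F, ∀ b ∈ F, a + b = χ + χ → a = χ := by
    intro a ha b hb hab
    by_contra hne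
    have hlt : toLex a < toLex χ := lt_of_le_of_ne (hmax a ha) (by
      exact fun h => hne h)
    have h1 : toLex (a + b) < toLex (χ + b) := lex_add_lt hlt b
    have h2 : toLex (χ + b) ≤ toLex (χ + χ) := by
      rcases eq_or_lt_of_le (hmax b hb) with h | h
      · rw [show b = χ from h]
      · have := lex_add_lt h χ
        rw [add_comm b χ, add_comm χ χ] at this
        exact this.le
    rw [hab] at h1
    exact absurd (h1.trans_le h2) (lt_irrefl _)
  intro a ha b hb hab
  exact ⟨key a ha b hb hab, key b hb a ha (by rwa [add_comm])⟩

lemma isReduced_of_sq {C : Type} [CommRing C] (h : ∀ a : C, a * a = 0 → a = 0) :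
    IsReduced C := by
  refine ⟨fun a ha => ?_⟩
  obtain ⟨m, hm⟩ := ha
  induction m using Nat.strong_induction_on generalizing a with
  | _ m ih =>
    match m, hm with
    | 0, hm =>
      calc a = a * a ^ 0 := by rw [pow_zero, mul_one]
        _ = 0 := by rw [hm, mul_zero]
    | 1, hm => simpa using hm
    | (m + 2), hm =>
      have hq1 : (m + 3) / 2 < m + 2 := by omega
      have hq2 : m + 2 ≤ 2 * ((m + 3) / 2) := by omega
      have hsq : a ^ ((m + 3) / 2) * a ^ ((m + 3) / 2) = 0 := by
        rw [← pow_add]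
        have he : (m + 3) / 2 + (m + 3) / 2 = (m + 2) + (2 * ((m + 3) / 2) - (m + 2)) := by
          omega
        rw [he, pow_add, hm, zero_mul]
      exact ih _ hq1 _ (h _ hsq)

/-- if every cone of the quasifan `Λ` is generated by finitely many lattice
points, then the quasifan algebra `k[Λ]` is a finitely generated `k`-algebra, it is reduced
and multiplicity-free, its weight set equals `|Λ| ∩ ℤⁿ`, and this weight set is saturated;
hence `Spec k[Λ]` is an affine stable toric variety. -/
theorem quasifan_algebra_is_astv {n : ℕ} (k : Type) [Field k]
    (Λ : Set (Set (Fin n → ℚ))) (hΛ : IsQuasifan Λ)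
    (hpoly : ∀ c ∈ Λ, ∃ S : Finset (Fin n → ℤ), c = coneGen (embQ '' (S : Set (Fin n → ℤ))))
    (C : Type) [CommRing C] [Algebra k C] (x : Module.Basis (QLat Λ) k C)
    (hmul : ∀ (χ₁ χ₂ : QLat Λ) (h : ∃ c ∈ Λ, embQ χ₁.1 ∈ c ∧ embQ χ₂.1 ∈ c),
      x χ₁ * x χ₂ = x ⟨χ₁.1 + χ₂.1, embQ_add_mem_support hΛ h⟩)
    (hmul0 : ∀ χ₁ χ₂ : QLat Λ, (¬ ∃ c ∈ Λ, embQ χ₁.1 ∈ c ∧ embQ χ₂.1 ∈ c) →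
      x χ₁ * x χ₂ = 0)
    (hone : ∀ h0 : embQ (0 : Fin n → ℤ) ∈ ⋃₀ Λ, x ⟨0, h0⟩ = 1) :
    Algebra.FiniteType k C ∧
    IsReduced C ∧
    (∀ χ : Fin n → ℤ, qfaComponent x χ ≠ ⊥ ↔ embQ χ ∈ ⋃₀ Λ) ∧
    (∀ χ : Fin n → ℤ, Module.finrank k (qfaComponent x χ) ≤ 1) ∧
    (∀ (χ : Fin n → ℤ) (m : ℕ), 0 < m → qfaComponent x (m • χ) ≠ ⊥ →
      qfaComponent x χ ≠ ⊥) := by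
  classical
  -- weight set characterization
  have hwt : ∀ χ : Fin n → ℤ, qfaComponent x χ ≠ ⊥ ↔ embQ χ ∈ ⋃₀ Λ := by
    intro χ
    constructor
    · intro h
      by_contra hm
      apply h
      have hempty : {y : C | ∃ h : embQ χ ∈ ⋃₀ Λ, y = x ⟨χ, h⟩} = ∅ := by
        rw [Set.eq_empty_iff_forall_notMem]
        rintro y ⟨h', -⟩
        exact hm h'
      rw [qfaComponent, hempty, Submodule.span_empty]
    · intro h hbot
      have hx : x ⟨χ, h⟩ ∈ qfaComponent x χ := Submodule.subset_span ⟨h, rfl⟩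
      rw [hbot, Submodule.mem_bot] at hx
      exact x.ne_zero _ hx
  -- finrank ≤ 1
  have hfr : ∀ χ : Fin n → ℤ, Module.finrank k (qfaComponent x χ) ≤ 1 := by
    intro χ
    by_cases h : embQ χ ∈ ⋃₀ Λ
    · have hset : {y : C | ∃ h : embQ χ ∈ ⋃₀ Λ, y = x ⟨χ, h⟩} = {x ⟨χ, h⟩} := by
        ext y
        simp only [Set.mem_setOf_eq, Set.mem_singleton_iff]
        exact ⟨fun ⟨h', hy⟩ => hy, fun hy => ⟨h, hy⟩⟩
      rw [qfaComponent, hset]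
      rcases eq_or_ne (x ⟨χ, h⟩) 0 with h0 | h0
      · rw [h0, Submodule.span_zero_singleton]
        simp
      · rw [finrank_span_singleton h0]
    · have : qfaComponent x χ = ⊥ := by
        by_contra hb
        exact h ((hwt χ).1 hb)
      rw [this]
      simp
  -- saturation
  have hsat : ∀ (χ : Fin n → ℤ) (m : ℕ), 0 < m → qfaComponent x (m • χ) ≠ ⊥ →
      qfaComponent x χ ≠ ⊥ := by
    intro χ m hm h
    obtain ⟨c, hc, hmem⟩ := (hwt _).1 h
    have hcone := hΛ.2.1 c hc
    have hq : (0 : ℚ) ≤ (m : ℚ)⁻¹ := by positivity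
    have := hcone.2.2 _ hq _ hmem
    rw [embQ_nsmul, smul_smul, inv_mul_cancel₀ (by exact_mod_cast hm.ne' : (m : ℚ) ≠ 0),
      one_smul] at this
    exact (hwt χ).2 ⟨c, hc, this⟩
  -- reducedness
  have hsq : ∀ a : C, a * a = 0 → a = 0 := by
    intro a ha
    by_contra hne
    have hrne : x.repr a ≠ 0 := fun h0 => hne (by
      have := congrArg x.repr.symm h0
      simpa using this)
    have hrsupp : (x.repr a).support.Nonempty := Finsupp.support_nonempty_iff.2 hrne
    obtain ⟨χ, hχF, hext⟩ := exists_extremal ((x.repr a).support.image Subtype.val)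
      (hrsupp.image _)
    obtain ⟨σ, hσs, hσv⟩ := Finset.mem_image.1 hχF
    obtain ⟨c, hc, hmemc⟩ := σ.2
    have hcom : ∃ c' ∈ Λ, embQ σ.1 ∈ c' ∧ embQ σ.1 ∈ c' := ⟨c, hc, hmemc, hmemc⟩
    set u : QLat Λ := ⟨σ.1 + σ.1, embQ_add_mem_support hΛ hcom⟩ with hu
    set L : C →ₗ[k] k := (Finsupp.lapply u).comp x.repr.toLinearMap with hL
    have hLx : ∀ τ : QLat Λ, L (x τ) = if τ = u then 1 else 0 := by
      intro τ
      simp [hL, Module.Basis.repr_self, Finsupp.single_apply]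
    have hexp : a = ∑ s ∈ (x.repr a).support, (x.repr a) s • x s := by
      conv_lhs => rw [← x.linearCombination_repr a]
      rw [Finsupp.linearCombination_apply, Finsupp.sum]
    have hexpand : L (a * a) = ∑ s ∈ (x.repr a).support, ∑ t ∈ (x.repr a).support,
        ((x.repr a) s * (x.repr a) t) • L (x s * x t) := by
      conv_lhs => rw [hexp, Finset.sum_mul_sum]
      rw [map_sum]
      apply Finset.sum_congr rfl
      intro s _
      rw [map_sum]
      apply Finset.sum_congr rfl
      intro t _
      rw [smul_mul_smul_comm, map_smul, smul_eq_mul]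
    have hzero : ∀ s ∈ (x.repr a).support, ∀ t ∈ (x.repr a).support, ¬(s = σ ∧ t = σ) →
        ((x.repr a) s * (x.repr a) t) • L (x s * x t) = 0 := by
      intro s hs t ht hne2
      by_cases hcc : ∃ c' ∈ Λ, embQ s.1 ∈ c' ∧ embQ t.1 ∈ c'
      · rw [hmul s t hcc]; erw [hLx]
        have hneq : (⟨s.1 + t.1, embQ_add_mem_support hΛ hcc⟩ : QLat Λ) ≠ u := by
          intro hequ
          have hval : s.1 + t.1 = σ.1 + σ.1 := by
            have := congrArg Subtype.val hequ
            simpa [hu] using this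
          have hsF : s.1 ∈ (x.repr a).support.image Subtype.val :=
            Finset.mem_image.2 ⟨s, hs, rfl⟩
          have htF : t.1 ∈ (x.repr a).support.image Subtype.val :=
            Finset.mem_image.2 ⟨t, ht, rfl⟩
          rw [hσv] at hval
          obtain ⟨hs1, ht1⟩ := hext s.1 hsF t.1 htF hval
          exact hne2 ⟨Subtype.ext (hs1.trans hσv.symm), Subtype.ext (ht1.trans hσv.symm)⟩
        erw [if_neg hneq]; rw [smul_zero]
      · rw [hmul0 s t hcc, map_zero, smul_zero]
    have hmain : L (a * a) = (x.repr a) σ * (x.repr a) σ := by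
      rw [hexpand]
      have h1 : ∑ s ∈ (x.repr a).support, ∑ t ∈ (x.repr a).support,
          ((x.repr a) s * (x.repr a) t) • L (x s * x t)
          = ∑ t ∈ (x.repr a).support, ((x.repr a) σ * (x.repr a) t) • L (x σ * x t) :=
        Finset.sum_eq_single_of_mem σ hσs (fun s hs hsne =>
          Finset.sum_eq_zero (fun t ht => hzero s hs t ht (fun hh => hsne hh.1)))
      rw [h1]
      have h2 : ∑ t ∈ (x.repr a).support, ((x.repr a) σ * (x.repr a) t) • L (x σ * x t)
          = ((x.repr a) σ * (x.repr a) σ) • L (x σ * x σ) :=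
        Finset.sum_eq_single_of_mem σ hσs
          (fun t ht htne => hzero σ hσs t ht (fun hh => htne hh.2))
      rw [h2, hmul σ σ hcom]; erw [hLx]; erw [if_pos hu.symm]; rw [smul_eq_mul, mul_one]
    rw [ha, map_zero] at hmain
    exact Finsupp.mem_support_iff.1 hσs (mul_self_eq_zero.1 hmain.symm)
  -- finite generation
  choose S hS using hpoly
  set T : ∀ c ∈ Λ, Finset (Fin n → ℤ) := fun c hc =>
    Finset.Icc (-(fun j => ∑ v ∈ S c hc, |v j|)) (fun j => ∑ v ∈ S c hc, |v j|) ∪ S c hc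
    with hT
  set Tall : Set (Fin n → ℤ) := ⋃ (c : ↥Λ), ↑(T c.1 c.2) with hTalldef
  have hTall : Tall.Finite := by
    haveI : Finite ↥Λ := hΛ.1.to_subtype
    exact Set.finite_iUnion (fun c => (T c.1 c.2).finite_toSet)
  set G : Set C := x '' {σ : QLat Λ | σ.1 ∈ Tall} with hGdef
  have hG : G.Finite :=
    ((hTall.preimage Subtype.val_injective.injOn).image x)
  have hmemG : ∀ c (hc : c ∈ Λ) χ, χ ∈ T c hc → ∀ hχ : embQ χ ∈ ⋃₀ Λ,
      x ⟨χ, hχ⟩ ∈ G := fun c hc χ hTmem hχ =>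
    ⟨⟨χ, hχ⟩, Set.mem_iUnion.2 ⟨⟨c, hc⟩, hTmem⟩, rfl⟩
  have hvcone : ∀ c (hc : c ∈ Λ), ∀ w ∈ S c hc, embQ w ∈ c := by
    intro c hc w hw
    rw [hS c hc, coneGen_int]
    refine ⟨fun v => if v = w then 1 else 0, fun v => by positivity, ?_⟩
    have : ∀ v ∈ S c hc, (if v = w then (1 : ℚ) else 0) • embQ v =
        if v = w then embQ v else 0 := by
      intro v _
      by_cases h : v = w <;> simp [h]
    rw [Finset.sum_congr rfl this, Finset.sum_ite_eq' _ w, if_pos hw]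
  have hbox : ∀ c (hc : c ∈ Λ) (χ : Fin n → ℤ) (d : (Fin n → ℤ) → ℚ),
      (∀ v, 0 ≤ d v) → (∀ v ∈ S c hc, d v ≤ 1) →
      embQ χ = ∑ v ∈ S c hc, d v • embQ v → χ ∈ T c hc := by
    intro c hc χ d hd hd1 hrep
    apply Finset.mem_union_left
    rw [Finset.mem_Icc]
    have key : ∀ j, |χ j| ≤ ∑ v ∈ S c hc, |v j| := by
      intro j
      have hQ : |(χ j : ℚ)| ≤ ∑ v ∈ S c hc, |(v j : ℚ)| := by
        have hχj : (χ j : ℚ) = ∑ v ∈ S c hc, d v * (v j : ℚ) := by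
          have := congrFun hrep j
          simpa [embQ, Finset.sum_apply] using this
        rw [hχj]
        calc |∑ v ∈ S c hc, d v * (v j : ℚ)| ≤ ∑ v ∈ S c hc, |d v * (v j : ℚ)| :=
              Finset.abs_sum_le_sum_abs _ _
          _ ≤ ∑ v ∈ S c hc, |(v j : ℚ)| := by
              apply Finset.sum_le_sum
              intro v hv
              rw [abs_mul, abs_of_nonneg (hd v)]
              calc d v * |(v j : ℚ)| ≤ 1 * |(v j : ℚ)| :=
                    mul_le_mul_of_nonneg_right (hd1 v hv) (abs_nonneg _)
                _ = |(v j : ℚ)| := one_mul _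
      exact_mod_cast hQ
    refine ⟨fun j => ?_, fun j => ?_⟩
    · have := (abs_le.1 (key j)).1
      simpa using this
    · exact (abs_le.1 (key j)).2
  have hgen : ∀ (N : ℕ) (c) (hc : c ∈ Λ) (χ : Fin n → ℤ) (hχ : embQ χ ∈ ⋃₀ Λ)
      (d : (Fin n → ℤ) → ℚ), (∀ v, 0 ≤ d v) → embQ χ = ∑ v ∈ S c hc, d v • embQ v →
      (∑ v ∈ S c hc, d v) < (N : ℚ) + 1 → x ⟨χ, hχ⟩ ∈ Algebra.adjoin k G := by
    intro N
    induction N with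
    | zero =>
      intro c hc χ hχ d hd hrep hlt
      have h1 : ∀ v ∈ S c hc, d v ≤ 1 := fun v hv =>
        le_trans (Finset.single_le_sum (f := d) (fun i _ => hd i) hv) (by
          push_cast at hlt; linarith)
      exact Algebra.subset_adjoin (hmemG c hc χ (hbox c hc χ d hd h1 hrep) hχ)
    | succ N ih =>
      intro c hc χ hχ d hd hrep hlt
      by_cases hbig : ∃ w ∈ S c hc, 1 ≤ d w
      · obtain ⟨w, hwS, hw1⟩ := hbig
        set d' : (Fin n → ℤ) → ℚ := fun v => if v = w then d v - 1 else d v with hd'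
        have hd'0 : ∀ v, 0 ≤ d' v := by
          intro v
          by_cases h : v = w
          · subst h; simp only [hd', if_pos rfl]; linarith
          · simp only [hd', if_neg h]; exact hd v
        have hsum' : ∑ v ∈ S c hc, d' v = (∑ v ∈ S c hc, d v) - 1 := by
          have hterm : ∀ v ∈ S c hc, d' v = d v - (if v = w then 1 else 0) := by
            intro v _
            by_cases h : v = w <;> simp [hd', h]
          rw [Finset.sum_congr rfl hterm, Finset.sum_sub_distrib,
            Finset.sum_ite_eq' _ w, if_pos hwS]
        have hrep' : embQ (χ - w) = ∑ v ∈ S c hc, d' v • embQ v := by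
          have hterm : ∀ v ∈ S c hc, d' v • embQ v =
              d v • embQ v - (if v = w then embQ v else 0) := by
            intro v _
            by_cases h : v = w <;> simp [hd', h, sub_smul, one_smul]
          rw [Finset.sum_congr rfl hterm, Finset.sum_sub_distrib,
            Finset.sum_ite_eq' _ w, if_pos hwS, embQ_sub, hrep]
        have hwc : embQ w ∈ c := hvcone c hc w hwS
        have hχ'c : embQ (χ - w) ∈ c := by
          rw [hS c hc, coneGen_int]
          exact ⟨d', hd'0, hrep'⟩
        have hχ' : embQ (χ - w) ∈ ⋃₀ Λ := ⟨c, hc, hχ'c⟩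
        have hwmem : embQ w ∈ ⋃₀ Λ := ⟨c, hc, hwc⟩
        have hcom : ∃ c' ∈ Λ, embQ w ∈ c' ∧ embQ (χ - w) ∈ c' := ⟨c, hc, hwc, hχ'c⟩
        have hprod := hmul ⟨w, hwmem⟩ ⟨χ - w, hχ'⟩ hcom
        have hxw : x ⟨w, hwmem⟩ ∈ Algebra.adjoin k G :=
          Algebra.subset_adjoin (hmemG c hc w (Finset.mem_union_right _ hwS) hwmem)
        have hx' : x ⟨χ - w, hχ'⟩ ∈ Algebra.adjoin k G := by
          apply ih c hc (χ - w) hχ' d' hd'0 hrep'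
          rw [hsum']
          push_cast at hlt ⊢
          linarith
        have heq : (⟨χ, hχ⟩ : QLat Λ) =
            ⟨w + (χ - w), embQ_add_mem_support hΛ hcom⟩ := Subtype.ext (by ring)
        rw [heq, ← hprod]
        exact Subalgebra.mul_mem _ hxw hx'
      · push_neg at hbig
        exact Algebra.subset_adjoin
          (hmemG c hc χ (hbox c hc χ d hd (fun v hv => (hbig v hv).le) hrep) hχ)
  have hft : Algebra.FiniteType k C := by
    refine ⟨⟨hG.toFinset, ?_⟩⟩
    rw [Set.Finite.coe_toFinset]
    rw [← top_le_iff]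
    intro z _
    have hz : z ∈ Submodule.span k (Set.range x) := by
      rw [x.span_eq]; trivial
    have hle : Submodule.span k (Set.range x) ≤
        Subalgebra.toSubmodule (Algebra.adjoin k G) := by
      rw [Submodule.span_le]
      rintro _ ⟨σ, rfl⟩
      obtain ⟨χ, hχ⟩ := σ
      have hc' := hχ
      obtain ⟨c, hc, hcc⟩ := hc'
      rw [hS c hc, coneGen_int] at hcc
      obtain ⟨d, hd, hrep⟩ := hcc
      exact hgen ⌊∑ v ∈ S c hc, d v⌋₊ c hc χ hχ d hd hrep (Nat.lt_floor_add_one _)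
    exact hle hz
  exact ⟨hft, isReduced_of_sq hsq, hwt, hfr, hsat⟩
end

section
/- Let k be a field of characteristic zero, let A be a finitely generated ℤⁿ-graded commutative k-algebra, and let χ ∈ ℤⁿ. Then the ray subalgebra A^{(χ)} = ⊕_{m≥0} A_{mχ} is a finitely generated k-algebra. -/
open DirectSum

/-- Gordan-type lemma: a "difference-closed" subset of `ι → ℕ` (for `ι` finite) is
generated, as an additive submonoid, by a finite subset of itself. -/
lemma gordan_aux {ι : Type*} [Fintype ι] (S : Set (ι → ℕ))
    (hsub : ∀ a b, a ∈ S → b ∈ S → b ≤ a → a - b ∈ S) :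
    ∃ G : Finset (ι → ℕ), ↑G ⊆ S ∧
      ∀ a ∈ S, a ∈ AddSubmonoid.closure (G : Set (ι → ℕ)) := by
  classical
  set Min : Set (ι → ℕ) := {a | a ∈ S ∧ a ≠ 0 ∧ ∀ b ∈ S, b ≠ 0 → b ≤ a → b = a} with hMin
  have hMinS : Min ⊆ S := fun a ha => ha.1
  have hanti : IsAntichain (· ≤ ·) Min := by
    intro a ha b hb hne hab
    exact hne (hb.2.2 a ha.1 ha.2.1 hab)
  have hfin : Min.Finite :=
    hanti.finite_of_partiallyWellOrderedOn
      (Set.isPWO_of_wellQuasiOrderedLE Min)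
  refine ⟨hfin.toFinset, by simpa using hMinS, ?_⟩
  have key : ∀ N : ℕ, ∀ a ∈ S, (∑ i, a i) ≤ N →
      a ∈ AddSubmonoid.closure (hfin.toFinset : Set (ι → ℕ)) := by
    intro N
    induction N with
    | zero =>
      intro a ha hle
      have : a = 0 := by
        funext i
        have := Finset.single_le_sum (f := a) (fun j _ => Nat.zero_le _)
          (Finset.mem_univ i)
        simp only [Pi.zero_apply]
        omega
      simpa [this] using (AddSubmonoid.closure (hfin.toFinset : Set (ι → ℕ))).zero_mem
    | succ N ih =>
      intro a ha hle
      by_cases ha0 : a = 0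
      · simpa [ha0] using (AddSubmonoid.closure (hfin.toFinset : Set (ι → ℕ))).zero_mem
      by_cases hmin : ∀ b ∈ S, b ≠ 0 → b ≤ a → b = a
      · exact AddSubmonoid.subset_closure
          (Finset.mem_coe.2 (hfin.mem_toFinset.2 ⟨ha, ha0, hmin⟩))
      push_neg at hmin
      obtain ⟨b, hbS, hb0, hba, hbne⟩ := hmin
      have hsumb_lt : (∑ i, b i) < ∑ i, a i := by
        obtain ⟨j, hj⟩ : ∃ j, b j ≠ a j := by
          by_contra h; push_neg at h; exact hbne (funext h)
        refine Finset.sum_lt_sum (fun i _ => hba i) ⟨j, Finset.mem_univ j, ?_⟩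
        exact lt_of_le_of_ne (hba j) hj
      have hb1 : 1 ≤ ∑ i, b i := by
        obtain ⟨j, hj⟩ : ∃ j, b j ≠ 0 := by
          by_contra h; push_neg at h; exact hb0 (funext h)
        have := Finset.single_le_sum (f := b) (fun i _ => Nat.zero_le _)
          (Finset.mem_univ j)
        omega
      have hsplit : (∑ i, (a - b) i) + ∑ i, b i = ∑ i, a i := by
        rw [← Finset.sum_add_distrib]
        exact Finset.sum_congr rfl fun i _ => Nat.sub_add_cancel (hba i)
      have hmem1 : b ∈ AddSubmonoid.closure (hfin.toFinset : Set (ι → ℕ)) :=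
        ih b hbS (by omega)
      have hmem2 : a - b ∈ AddSubmonoid.closure (hfin.toFinset : Set (ι → ℕ)) :=
        ih (a - b) (hsub a b ha hbS hba) (by omega)
      have : b + (a - b) = a := funext fun i => Nat.add_sub_cancel' (hba i)
      simpa [this] using AddSubmonoid.add_mem _ hmem1 hmem2
  intro a ha
  exact key (∑ i, a i) a ha le_rfl

/-- for a finitely generated `ℤⁿ`-graded commutative algebra `A` over a field
`k` of characteristic zero and any `χ ∈ ℤⁿ`, the ray subalgebra `A^{(χ)} = ⊕_{m ≥ 0} A_{mχ}`
is a finitely generated `k`-algebra: there is a finite set whose generated `k`-subalgebra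
has `⊕_{m ≥ 0} A_{mχ}` as underlying submodule. -/
theorem ray_subalgebra_finitely_generated
    (k : Type) [Field k] [CharZero k] {n : ℕ}
    (A : Type) [CommRing A] [Algebra k A]
    (𝒜 : (Fin n → ℤ) → Submodule k A) [GradedAlgebra 𝒜]
    (hfg : Algebra.FiniteType k A) (χ : Fin n → ℤ) :
    ∃ s : Finset A,
      Subalgebra.toSubmodule (Algebra.adjoin k (s : Set A)) = ⨆ m : ℕ, 𝒜 (m • χ) := by
  classical
  obtain ⟨t, ht⟩ := hfg.out
  -- a homogeneous generating set
  set s₀ : Finset A := t.biUnion (fun y =>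
    (DirectSum.decompose 𝒜 y).support.image (fun i => ((DirectSum.decompose 𝒜 y) i : A)))
    with hs₀
  have hhom : ∀ z ∈ s₀, ∃ i, z ∈ 𝒜 i := by
    intro z hz
    simp only [hs₀, Finset.mem_biUnion, Finset.mem_image] at hz
    obtain ⟨y, -, i, -, rfl⟩ := hz
    exact ⟨i, ((DirectSum.decompose 𝒜 y) i).2⟩
  have htop : Algebra.adjoin k (s₀ : Set A) = ⊤ := by
    rw [eq_top_iff, ← ht]
    apply Algebra.adjoin_le
    intro y hy
    rw [← DirectSum.sum_support_decompose 𝒜 y]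
    refine Subalgebra.sum_mem _ fun i hi => Algebra.subset_adjoin ?_
    exact Finset.mem_coe.2 (Finset.mem_biUnion.2 ⟨y, hy, Finset.mem_image_of_mem _ hi⟩)
  -- degrees of the homogeneous generators
  let ι := {z : A // z ∈ s₀}
  let d : ι → (Fin n → ℤ) := fun z => (hhom z z.2).choose
  have hd : ∀ z : ι, (z : A) ∈ 𝒜 (d z) := fun z => (hhom z z.2).choose_spec
  let mon : (ι → ℕ) → A := fun a => ∏ z : ι, (z : A) ^ a z
  have hmon : ∀ a, mon a ∈ 𝒜 (∑ z : ι, a z • d z) := fun a =>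
    SetLike.prod_pow_mem_graded 𝒜 d (fun z => (z : A)) a (fun z _ => hd z)
  have hmonadd : ∀ a b, mon (a + b) = mon a * mon b := by
    intro a b
    simp only [mon, Pi.add_apply, pow_add]
    exact Finset.prod_mul_distrib
  -- the solution monoid
  set S : Set (Option ι → ℕ) :=
    {a | (∑ z : ι, a (some z) • d z) = a none • χ} with hSdef
  have hsub : ∀ a b, a ∈ S → b ∈ S → b ≤ a → a - b ∈ S := by
    intro a b haS hbS hba
    simp only [hSdef, Set.mem_setOf_eq] at haS hbS ⊢
    have h1 : (∑ z : ι, b (some z) • d z) + ∑ z : ι, (a - b) (some z) • d z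
        = ∑ z : ι, a (some z) • d z := by
      rw [← Finset.sum_add_distrib]
      refine Finset.sum_congr rfl fun z _ => ?_
      rw [← add_smul]
      congr 1
      exact Nat.add_sub_cancel' (hba (some z))
    have h2 : b none • χ + (a - b) none • χ = a none • χ := by
      rw [← add_smul]
      congr 1
      exact Nat.add_sub_cancel' (hba none)
    have := h1
    rw [haS, hbS] at this
    -- this : a' none • χ ... : b none • χ + ∑ (a-b) = a none • χ
    have h3 : b none • χ + ∑ z : ι, (a - b) (some z) • d z
        = b none • χ + (a - b) none • χ := by rw [this, h2]
    exact add_left_cancel h3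
  obtain ⟨G', hG'S, hG'gen⟩ := gordan_aux S hsub
  -- the generating finset
  set G : Finset (ι → ℕ) := G'.image (fun g z => g (some z)) with hG
  refine ⟨G.image mon, ?_⟩
  set R : Submodule k A := ⨆ m : ℕ, 𝒜 (m • χ) with hR
  -- R is closed under the algebra operations
  have hR1 : (1 : A) ∈ R := by
    refine le_iSup (fun m : ℕ => 𝒜 (m • χ)) 0 ?_
    show (1 : A) ∈ 𝒜 ((0 : ℕ) • χ)
    rw [zero_smul]
    exact SetLike.one_mem_graded 𝒜
  have hRalg : ∀ c : k, algebraMap k A c ∈ R := by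
    intro c
    refine le_iSup (fun m : ℕ => 𝒜 (m • χ)) 0 ?_
    show algebraMap k A c ∈ 𝒜 ((0 : ℕ) • χ)
    rw [zero_smul]
    exact SetLike.algebraMap_mem_graded 𝒜 c
  have hRmul : ∀ {x y : A}, x ∈ R → y ∈ R → x * y ∈ R := by
    intro x y hx hy
    have hRR : R * R ≤ R := by
      rw [hR, Submodule.iSup_mul]
      refine iSup_le fun m => ?_
      rw [Submodule.mul_iSup]
      refine iSup_le fun m' => ?_
      refine le_trans (Submodule.mul_le.2 fun u hu v hv => ?_)
        (le_iSup (fun m : ℕ => 𝒜 (m • χ)) (m + m'))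
      have := SetLike.mul_mem_graded hu hv
      rwa [← add_smul] at this
    exact hRR (Submodule.mul_mem_mul hx hy)
  let B : Subalgebra k A :=
    { carrier := (R : Set A)
      mul_mem' := hRmul
      one_mem' := hR1
      add_mem' := fun hx hy => R.add_mem hx hy
      zero_mem' := R.zero_mem
      algebraMap_mem' := hRalg }
  have hBR : Subalgebra.toSubmodule B = R := rfl
  -- every monomial coming from `G` lies in `R`
  have hmonR : ∀ x ∈ (G.image mon : Finset A), x ∈ R := by
    intro x hx
    rw [Finset.mem_image] at hx
    obtain ⟨a, haG, rfl⟩ := hx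
    rw [hG, Finset.mem_image] at haG
    obtain ⟨g, hgG', rfl⟩ := haG
    have hgS : g ∈ S := hG'S hgG'
    refine le_iSup (fun m : ℕ => 𝒜 (m • χ)) (g none) ?_
    have := hmon (fun z => g (some z))
    rwa [hgS] at this
  -- inclusion ≤
  have hle : Subalgebra.toSubmodule (Algebra.adjoin k ((G.image mon : Finset A) : Set A)) ≤ R := by
    rw [← hBR]
    have : Algebra.adjoin k ((G.image mon : Finset A) : Set A) ≤ B :=
      Algebra.adjoin_le (fun x hx => hmonR x hx)
    exact fun x hx => this hx
  -- monomials indexed by the closure of `G'` lie in the adjoin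
  have hkey : ∀ c ∈ AddSubmonoid.closure (G' : Set (Option ι → ℕ)),
      mon (fun z => c (some z)) ∈ Algebra.adjoin k ((G.image mon : Finset A) : Set A) := by
    intro c hc
    induction hc using AddSubmonoid.closure_induction with
    | mem g hg =>
      refine Algebra.subset_adjoin ?_
      refine Finset.mem_coe.2 (Finset.mem_image.2 ⟨fun z => g (some z), ?_, rfl⟩)
      rw [hG]
      exact Finset.mem_image.2 ⟨g, hg, rfl⟩
    | zero => simpa [mon] using (Algebra.adjoin k ((G.image mon : Finset A) : Set A)).one_mem
    | add c c' _ _ hc hc' =>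
      have : mon (fun z => (c + c') (some z)) =
          mon (fun z => c (some z)) * mon (fun z => c' (some z)) := by
        rw [← hmonadd]; rfl
      rw [this]
      exact mul_mem hc hc'
  -- every element of the closure of s₀ is a monomial
  have hclosmon : ∀ z ∈ Submonoid.closure (s₀ : Set A), ∃ a : ι → ℕ, z = mon a := by
    intro z hz
    induction hz using Submonoid.closure_induction with
    | mem w hw =>
      have hw' : w ∈ s₀ := Finset.mem_coe.1 hw
      refine ⟨fun u => if u = (⟨w, hw'⟩ : ι) then 1 else 0, ?_⟩
      symm
      show (∏ u : ι, (u : A) ^ (if u = (⟨w, hw'⟩ : ι) then 1 else 0)) = w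
      rw [Finset.prod_eq_single (⟨w, hw'⟩ : ι)]
      · simp
      · intro u _ hu; simp [hu]
      · intro h; exact absurd (Finset.mem_univ _) h
    | one => exact ⟨0, by simp [mon]⟩
    | mul x y _ _ hx hy =>
      obtain ⟨a, rfl⟩ := hx
      obtain ⟨b, rfl⟩ := hy
      exact ⟨a + b, (hmonadd a b).symm⟩
  -- inclusion ≥
  have hge : R ≤ Subalgebra.toSubmodule (Algebra.adjoin k ((G.image mon : Finset A) : Set A)) := by
    rw [hR]
    refine iSup_le fun m => ?_
    intro y hy
    have hy' : y ∈ Submodule.span k ((Submonoid.closure (s₀ : Set A) : Submonoid A) : Set A) := by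
      have hy2 : y ∈ Subalgebra.toSubmodule (Algebra.adjoin k (s₀ : Set A)) := by
        rw [htop]; trivial
      rwa [Algebra.adjoin_eq_span] at hy2
    have hmaple : Submodule.map (GradedAlgebra.proj 𝒜 (m • χ))
        (Submodule.span k ((Submonoid.closure (s₀ : Set A) : Submonoid A) : Set A))
        ≤ Subalgebra.toSubmodule (Algebra.adjoin k ((G.image mon : Finset A) : Set A)) := by
      refine (Submodule.map_span_le _ _ _).2 ?_
      intro z hz
      obtain ⟨a, rfl⟩ := hclosmon z hz
      by_cases hdeg : (∑ z : ι, a z • d z) = m • χ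
      · have hproj : GradedAlgebra.proj 𝒜 (m • χ) (mon a) = mon a := by
          rw [GradedAlgebra.proj_apply,
            DirectSum.decompose_of_mem_same 𝒜 (hdeg ▸ hmon a)]
        rw [hproj]
        -- lift a to the solution monoid
        set a' : Option ι → ℕ := fun o => Option.casesOn o m a with ha'
        have ha'S : a' ∈ S := by
          simp only [hSdef, Set.mem_setOf_eq]
          exact hdeg
        have := hkey a' (hG'gen a' ha'S)
        exact this
      · have hproj : GradedAlgebra.proj 𝒜 (m • χ) (mon a) = 0 := by
          rw [GradedAlgebra.proj_apply,
            DirectSum.decompose_of_mem_ne 𝒜 (hmon a) hdeg]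
        rw [hproj]
        exact Submodule.zero_mem _
    have hproj : GradedAlgebra.proj 𝒜 (m • χ) y = y := by
      rw [GradedAlgebra.proj_apply, DirectSum.decompose_of_mem_same 𝒜 hy]
    rw [← hproj]
    exact hmaple (Submodule.mem_map_of_mem hy')
  exact le_antisymm hle hge
end
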